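/- The exponential vectors {e(x) : x ∈ H} form a linearly independent subset of the symmetric Fock space Γ(H): for distinct x₁, …, xₙ ∈ H, the vectors e(x₁), …, e(xₙ) are linearly independent. -/

import Mathlib

open scoped InnerProductSpace

/-- The exponential vectors `e(x)`, `x ∈ H`, in the symmetric Fock space
`Γ(H)` are linearly independent: for distinct `x₁, …, xₙ` the vectors `e(x₁), …, e(xₙ)`
are linearly independent. The Fock space is encoded abstractly by a map `e : H → Γ`
satisfying the characteristic inner-product identity `⟨e(x), e(y)⟩ = exp ⟨x, y⟩`. -/
theorem exponential_vectors_linearIndependent {H : Type*} [NormedAddCommGroup H]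
    [InnerProductSpace ℂ H] {Γ : Type*} [NormedAddCommGroup Γ] [InnerProductSpace ℂ Γ]
    [CompleteSpace Γ] (e : H → Γ)
    (he : ∀ x y : H, ⟪e x, e y⟫_ℂ = Complex.exp ⟪x, y⟫_ℂ)
    {n : ℕ} (x : Fin n → H) (hx : Function.Injective x) :
    LinearIndependent ℂ fun i : Fin n => e (x i) := by
  classical
  -- characters y ↦ exp ⟪y, x i⟫ on Multiplicative H
  let χ : Fin n → (Multiplicative H →* ℂ) := fun i =>
    { toFun := fun y => Complex.exp ⟪Multiplicative.toAdd y, x i⟫_ℂ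
      map_one' := by simp
      map_mul' := fun a b => by
        simp [inner_add_left, Complex.exp_add] }
  have hχinj : Function.Injective χ := by
    intro i j hij
    by_contra hne
    have hxij : x i ≠ x j := fun h => hne (hx h)
    set v := x i - x j with hv
    have hv0 : v ≠ 0 := sub_ne_zero.mpr hxij
    have h1 : Complex.exp ⟪v, x i⟫_ℂ = Complex.exp ⟪v, x j⟫_ℂ := by
      have := congrArg (fun f : Multiplicative H →* ℂ => f (Multiplicative.ofAdd v)) hij
      simpa [χ] using this
    have h2 : Complex.exp (⟪v, x i⟫_ℂ - ⟪v, x j⟫_ℂ) = 1 := by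
      rw [Complex.exp_sub, h1, div_self (Complex.exp_ne_zero _)]
    have h3 : ⟪v, x i⟫_ℂ - ⟪v, x j⟫_ℂ = ⟪v, v⟫_ℂ := by
      rw [hv, inner_sub_right]
    rw [h3] at h2
    have h4 : ‖Complex.exp ⟪v, v⟫_ℂ‖ = 1 := by rw [h2]; simp
    rw [Complex.norm_exp] at h4
    have h5 : (⟪v, v⟫_ℂ).re = ‖v‖ ^ 2 := by
      simpa using inner_self_eq_norm_sq (𝕜 := ℂ) (x := v)
    rw [h5, Real.exp_eq_one_iff] at h4
    exact hv0 (by simpa using norm_eq_zero.mp (by nlinarith [norm_nonneg v]))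
  have li : LinearIndependent ℂ fun i => ((χ i : Multiplicative H → ℂ)) :=
    (linearIndependent_monoidHom (Multiplicative H) ℂ).comp χ hχinj
  rw [Fintype.linearIndependent_iff]
  intro c hc
  have key : ∀ y : H, ∑ i, c i * Complex.exp ⟪y, x i⟫_ℂ = 0 := by
    intro y
    have h0 : ⟪e y, ∑ i, c i • e (x i)⟫_ℂ = 0 := by rw [hc, inner_zero_right]
    calc ∑ i, c i * Complex.exp ⟪y, x i⟫_ℂ
        = ∑ i, c i * ⟪e y, e (x i)⟫_ℂ := by simp [he]
      _ = ⟪e y, ∑ i, c i • e (x i)⟫_ℂ := by rw [inner_sum]; simp [inner_smul_right]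
      _ = 0 := h0
  have hsum : (∑ i, c i • ((χ i : Multiplicative H → ℂ))) = 0 := by
    funext y
    simpa [χ] using key (Multiplicative.toAdd y)
  exact Fintype.linearIndependent_iff.mp li c hsum
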